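/- arXiv:1411.6301 — 4 statements merged into one kernel-verified Lean document; each statement's English description precedes it below -/
import Mathlib

section
/- Fix an integer n ≥ 1 and let ζ := exp(2πi/n). Let q : ℕ → ℤ/nℤ → ℝ[x,x⁻¹] be such that each q_{j,g} has nonnegative coefficients and Σ_{g∈ℤ/nℤ} q_{j,g}(1) = 1 for every j, and set p_{k,j} := Σ_{g∈ℤ/nℤ} ζ^{(k·g)}·q_{j,g} ∈ ℂ[x,x⁻¹] for k ∈ ℤ/nℤ. Assume: (a) weak ergodicity: for all k ≠ l in ℤ/nℤ, the series Σ_j (Σ_{(g,h) : (k−l)·(g−h) ≠ 0 in ℤ/nℤ} q_{j,g}(1)·q_{j,h}(1)) diverges; and (b) the squared sequence is hollow: for every k ≠ 0 and every j₀, ‖∏_{j=j₀}^{j₀+d} p_{k,j}²‖₁ tends to 0 as d → ∞. Then for every l ≠ 0 in ℤ/nℤ and every j₀, the l¹ norms ‖Σ_{k∈ℤ/nℤ} ∏_{j=j₀}^{j₀+d} (p_{k,j} · p_{l,j})‖₁ tend to 0 as d → ∞. -/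
open Finsupp Filter

/-- The coefficients of a real Laurent polynomial. -/
def lcoeff (p : AddMonoidAlgebra ℝ ℤ) : ℤ →₀ ℝ := p.coeff

/-- The coefficients of a complex Laurent polynomial. -/
def lcoeffC (p : AddMonoidAlgebra ℂ ℤ) : ℤ →₀ ℂ := p.coeff

/-- The `l¹` norm of a complex Laurent polynomial. -/
noncomputable def l1C (p : AddMonoidAlgebra ℂ ℤ) : ℝ := (lcoeffC p).sum fun _ c => ‖c‖

/-- Evaluation of a real Laurent polynomial at `x = 1`. -/
noncomputable def ev1 (p : AddMonoidAlgebra ℝ ℤ) : ℝ := (lcoeff p).sum fun _ c => c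

/-- A real Laurent polynomial viewed as a complex Laurent polynomial. -/
noncomputable def toC (p : AddMonoidAlgebra ℝ ℤ) : AddMonoidAlgebra ℂ ℤ :=
  AddMonoidAlgebra.ofCoeff (Finsupp.mapRange (fun r : ℝ => (r : ℂ)) Complex.ofReal_zero (lcoeff p))

/-- The `k`-th eigenvalue polynomial `p_{k,j} = ∑_g ζ^{kg}·q_{j,g}` of a circulant
family, `ζ = exp(2πi/n)`. -/
noncomputable def eigpoly (n : ℕ) (q : ℕ → ZMod n → AddMonoidAlgebra ℝ ℤ) [NeZero n]
    (k : ZMod n) (j : ℕ) : AddMonoidAlgebra ℂ ℤ :=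
  ∑ g : ZMod n, (Complex.exp (2 * Real.pi * Complex.I / n)) ^ ((k * g).val) • toC (q j g)

section Aux

lemma l1C_eq_sum {p : AddMonoidAlgebra ℂ ℤ} {s : Finset ℤ} (h : (lcoeffC p).support ⊆ s) :
    l1C p = ∑ a ∈ s, ‖(lcoeffC p) a‖ := by
  rw [l1C, Finsupp.sum]
  exact Finset.sum_subset h (by intro x _ hx; simp [Finsupp.notMem_support_iff.mp hx])

lemma l1C_nonneg (p : AddMonoidAlgebra ℂ ℤ) : 0 ≤ l1C p :=
  Finset.sum_nonneg fun _ _ => norm_nonneg _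

lemma l1C_zero : l1C 0 = 0 := by simp [l1C, lcoeffC]

lemma l1C_add_le (p q : AddMonoidAlgebra ℂ ℤ) : l1C (p + q) ≤ l1C p + l1C q := by
  have hs : (lcoeffC (p + q)).support ⊆ (lcoeffC p).support ∪ (lcoeffC q).support := by
    simp only [lcoeffC, AddMonoidAlgebra.coeff_add]; exact Finsupp.support_add
  rw [l1C_eq_sum hs, l1C_eq_sum (Finset.subset_union_left (s₂ := (lcoeffC q).support)),
    l1C_eq_sum (Finset.subset_union_right (s₁ := (lcoeffC p).support)), ← Finset.sum_add_distrib]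
  exact Finset.sum_le_sum fun a _ => norm_add_le _ _

lemma l1C_sum_le {ι : Type*} (s : Finset ι) (f : ι → AddMonoidAlgebra ℂ ℤ) :
    l1C (∑ i ∈ s, f i) ≤ ∑ i ∈ s, l1C (f i) := by
  classical
  induction s using Finset.cons_induction with
  | empty => simp [l1C_zero]
  | cons a s ha ih =>
    rw [Finset.sum_cons, Finset.sum_cons]
    exact (l1C_add_le _ _).trans (by linarith)

lemma l1C_smul_le (c : ℂ) (p : AddMonoidAlgebra ℂ ℤ) : l1C (c • p) ≤ ‖c‖ * l1C p := by
  have hs : (lcoeffC (c • p)).support ⊆ (lcoeffC p).support := by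
    simp only [lcoeffC, AddMonoidAlgebra.coeff_smul]; exact Finsupp.support_smul
  rw [l1C_eq_sum hs, l1C, Finsupp.sum, Finset.mul_sum]
  refine Finset.sum_le_sum fun a _ => ?_
  have : (lcoeffC (c • p)) a = c * (lcoeffC p) a := rfl
  rw [this, norm_mul]

lemma l1C_single_le (a : ℤ) (c : ℂ) : l1C (AddMonoidAlgebra.single a c) ≤ ‖c‖ := by
  classical
  by_cases h : c = 0
  · simp [h, l1C, lcoeffC, AddMonoidAlgebra.coeff_single]
  · have : l1C (AddMonoidAlgebra.single a c) = ‖c‖ := by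
      rw [l1C, lcoeffC, AddMonoidAlgebra.coeff_single, Finsupp.sum_single_index]; simp
    rw [this]

lemma l1C_mul_le (p q : AddMonoidAlgebra ℂ ℤ) : l1C (p * q) ≤ l1C p * l1C q := by
  classical
  rw [AddMonoidAlgebra.mul_def]
  refine le_trans (b := ∑ a ∈ (lcoeffC p).support, ∑ b ∈ (lcoeffC q).support,
      ‖(lcoeffC p) a * (lcoeffC q) b‖) ?_ ?_
  · refine le_trans (l1C_sum_le _ _) (Finset.sum_le_sum fun a _ => ?_)
    exact le_trans (l1C_sum_le _ _) (Finset.sum_le_sum fun b _ => l1C_single_le _ _)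
  · rw [l1C, l1C, Finsupp.sum, Finsupp.sum, Finset.sum_mul_sum]
    exact le_of_eq (Finset.sum_congr rfl fun a _ => Finset.sum_congr rfl fun b _ => norm_mul _ _)

lemma l1C_one : l1C (1 : AddMonoidAlgebra ℂ ℤ) ≤ 1 := by
  have : (1 : AddMonoidAlgebra ℂ ℤ) = AddMonoidAlgebra.single 0 1 := rfl
  rw [this]
  simpa using l1C_single_le (0 : ℤ) (1 : ℂ)

lemma l1C_toC {p : AddMonoidAlgebra ℝ ℤ} (h : ∀ m, 0 ≤ lcoeff p m) : l1C (toC p) = ev1 p := by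
  rw [l1C, toC, lcoeffC, AddMonoidAlgebra.coeff_ofCoeff, Finsupp.sum_mapRange_index (by simp), ev1]
  exact Finsupp.sum_congr fun a ha => by
    rw [Complex.norm_real, Real.norm_eq_abs, abs_of_nonneg (h a)]

lemma ev1_nonneg {p : AddMonoidAlgebra ℝ ℤ} (h : ∀ m, 0 ≤ lcoeff p m) : 0 ≤ ev1 p :=
  Finset.sum_nonneg fun a _ => h a

section Zeta
variable (n : ℕ) [NeZero n]

noncomputable def zet : ℂ := Complex.exp (2 * Real.pi * Complex.I / n)

lemma zet_pow_n : (zet n) ^ n = 1 := (Complex.isPrimitiveRoot_exp n (NeZero.ne n)).pow_eq_one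

lemma zet_norm : ‖zet n‖ = 1 := by
  have h := congrArg norm (zet_pow_n n)
  rw [norm_pow, norm_one] at h
  have h0 : (0:ℝ) ≤ ‖zet n‖ := norm_nonneg _
  have : ‖zet n‖ = 1 := by
    rcases lt_trichotomy (‖zet n‖) 1 with hlt | heq | hgt
    · exact absurd h (by have := pow_lt_one₀ h0 hlt (NeZero.ne n); exact ne_of_lt this)
    · exact heq
    · exact absurd h (by have := one_lt_pow₀ hgt (NeZero.ne n); exact ne_of_gt this)
  simpa using this

lemma zet_chi_mul (a b : ZMod n) :
    (zet n) ^ a.val * (zet n) ^ b.val = (zet n) ^ (a + b).val := by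
  rw [ZMod.val_add, ← pow_eq_pow_mod _ (zet_pow_n n), pow_add]

lemma zet_chi_norm (a : ZMod n) : ‖(zet n) ^ a.val‖ = 1 := by
  rw [norm_pow, zet_norm, one_pow]

lemma zet_chi_ne_one {a : ZMod n} (ha : a ≠ 0) : (zet n) ^ a.val ≠ 1 := by
  refine (Complex.isPrimitiveRoot_exp n (NeZero.ne n)).pow_ne_one_of_pos_of_lt ?_ (ZMod.val_lt a)
  exact (fun h => ha ((ZMod.val_eq_zero a).mp h))

end Zeta

lemma norm_one_add_lt_two {z : ℂ} (hz : ‖z‖ = 1) (hne : z ≠ 1) : ‖1 + z‖ < 2 := by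
  have habs : ‖z‖ = 1 := hz
  have hnsq : Complex.normSq z = 1 := by rw [← Complex.sq_norm, habs, one_pow]
  have hsq : z.re ^ 2 + z.im ^ 2 = 1 := by rw [← hnsq, Complex.normSq_apply]; ring
  have hre : z.re < 1 := by
    rcases lt_or_eq_of_le (Complex.re_le_norm z) with h | h
    · rwa [habs] at h
    · exfalso
      have hre1 : z.re = 1 := by rw [h, habs]
      have him : z.im = 0 := by nlinarith
      exact hne (Complex.ext (by rw [hre1]; simp) (by simp [him]))
  have h4 : ‖1 + z‖ ^ 2 < 2 ^ 2 := by
    rw [Complex.sq_norm, Complex.normSq_add]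
    simp only [Complex.normSq_one, Complex.one_re, Complex.one_im, Complex.normSq_apply,
      Complex.mul_re, Complex.conj_re, Complex.conj_im]
    nlinarith
  exact lt_of_pow_lt_pow_left₀ 2 (by norm_num) h4

/-- Symmetrization identity for the product of two eigenvalue polynomials. -/
lemma eig_mul_eig (n : ℕ) [NeZero n] (q : ℕ → ZMod n → AddMonoidAlgebra ℝ ℤ)
    (k l : ZMod n) (j : ℕ) :
    eigpoly n q k j * eigpoly n q l j =
      ∑ g : ZMod n, ∑ h : ZMod n,
        (((zet n) ^ (k * g).val * (zet n) ^ (l * h).val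
          + (zet n) ^ (k * h).val * (zet n) ^ (l * g).val) / 2)
          • (toC (q j g) * toC (q j h)) := by
  classical
  set A : ZMod n → AddMonoidAlgebra ℂ ℤ := fun g => toC (q j g) with hA
  set x : ZMod n → ZMod n → ℂ := fun g h => (zet n) ^ (k * g).val * (zet n) ^ (l * h).val with hx
  have step1 : eigpoly n q k j * eigpoly n q l j
      = ∑ g : ZMod n, ∑ h : ZMod n, x g h • (A g * A h) := by
    rw [eigpoly, eigpoly, Finset.sum_mul_sum]
    exact Finset.sum_congr rfl fun g _ => Finset.sum_congr rfl fun h _ =>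
      smul_mul_smul_comm _ _ _ _
  have swap : ∀ y : ZMod n → ZMod n → ℂ,
      (∑ g : ZMod n, ∑ h : ZMod n, y g h • (A g * A h))
        = ∑ g : ZMod n, ∑ h : ZMod n, y h g • (A g * A h) := by
    intro y
    rw [Finset.sum_comm]
    exact Finset.sum_congr rfl fun g _ => Finset.sum_congr rfl fun h _ => by
      rw [mul_comm (A h) (A g)]
  have half : ∀ y : ZMod n → ZMod n → ℂ,
      (∑ g : ZMod n, ∑ h : ZMod n, (y g h / 2) • (A g * A h))
        = (2:ℂ)⁻¹ • ∑ g : ZMod n, ∑ h : ZMod n, y g h • (A g * A h) := by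
    intro y
    rw [Finset.smul_sum]
    refine Finset.sum_congr rfl fun g _ => ?_
    rw [Finset.smul_sum]
    refine Finset.sum_congr rfl fun h _ => ?_
    rw [div_eq_inv_mul, mul_smul]
  rw [step1]
  have expand : ∑ g : ZMod n, ∑ h : ZMod n,
      ((x g h + x h g) / 2) • (A g * A h)
      = (∑ g : ZMod n, ∑ h : ZMod n, (x g h / 2) • (A g * A h))
        + ∑ g : ZMod n, ∑ h : ZMod n, (x h g / 2) • (A g * A h) := by
    rw [← Finset.sum_add_distrib]
    refine Finset.sum_congr rfl fun g _ => ?_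
    rw [← Finset.sum_add_distrib]
    refine Finset.sum_congr rfl fun h _ => ?_
    rw [add_div, add_smul]
  calc ∑ g : ZMod n, ∑ h : ZMod n, x g h • (A g * A h)
      = ((2:ℂ)⁻¹ + (2:ℂ)⁻¹) • ∑ g : ZMod n, ∑ h : ZMod n, x g h • (A g * A h) := by
        norm_num
    _ = ∑ g : ZMod n, ∑ h : ZMod n, ((x g h + x h g) / 2) • (A g * A h) := by
        rw [expand, half, half, ← swap x, add_smul]

end Aux

open scoped Classical in
/-- The forward direction of Proposition 2.10 for circulant matrices: if the sequence is
weakly ergodic and the squared sequence is hollow, then the sequence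
`tr(M^{(i)})·M^{(i)}` is hollow; at the level of eigenvalue polynomials, the `l¹` norms
`‖∑_k ∏_{j=j₀}^{j₀+d} p_{k,j} p_{l,j}‖₁` tend to `0` for every `l ≠ 0`. -/
theorem trace_times_matrix_hollow (n : ℕ) [NeZero n]
    (q : ℕ → ZMod n → AddMonoidAlgebra ℝ ℤ)
    (hpos : ∀ j g m, 0 ≤ lcoeff (q j g) m)
    (hsum : ∀ j, ∑ g, ev1 (q j g) = 1)
    (herg : ∀ k l : ZMod n, k ≠ l →
      ¬ Summable (fun j => ∑ g : ZMod n, ∑ h : ZMod n,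
        if (k - l) * (g - h) ≠ 0 then ev1 (q j g) * ev1 (q j h) else 0))
    (hhollow : ∀ k : ZMod n, k ≠ 0 → ∀ j₀ : ℕ,
      Tendsto (fun d => l1C (∏ j ∈ Finset.Icc j₀ (j₀ + d), (eigpoly n q k j) ^ 2))
        atTop (nhds 0)) :
    ∀ l : ZMod n, l ≠ 0 → ∀ j₀ : ℕ,
      Tendsto
        (fun d => l1C (∑ k : ZMod n,
          ∏ j ∈ Finset.Icc j₀ (j₀ + d), (eigpoly n q k j * eigpoly n q l j)))
        atTop (nhds 0) := by
  intro l hl j₀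
  -- the uniform spectral gap constant
  have hEne : l ∈ Finset.univ.erase (0 : ZMod n) := Finset.mem_erase.mpr ⟨hl, Finset.mem_univ l⟩
  have hE : (Finset.univ.erase (0 : ZMod n)).Nonempty := ⟨l, hEne⟩
  set c : ℝ := (Finset.univ.erase (0 : ZMod n)).inf' hE
    (fun v => 1 - ‖1 + (zet n) ^ v.val‖ / 2) with hc
  have hc_pos : 0 < c := by
    rw [hc, Finset.lt_inf'_iff]
    intro v hv
    have hvne : v ≠ 0 := (Finset.mem_erase.mp hv).1
    have := norm_one_add_lt_two (zet_chi_norm n v) (zet_chi_ne_one n hvne)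
    linarith
  have hc_le : ∀ v : ZMod n, v ≠ 0 → ‖1 + (zet n) ^ v.val‖ / 2 ≤ 1 - c := by
    intro v hv
    have : c ≤ 1 - ‖1 + (zet n) ^ v.val‖ / 2 :=
      Finset.inf'_le (fun v : ZMod n => 1 - ‖1 + (zet n) ^ v.val‖ / 2)
        (Finset.mem_erase.mpr ⟨hv, Finset.mem_univ v⟩)
    linarith
  have hc_le1 : c ≤ 1 := by
    have := hc_le l hl
    have h2 := norm_nonneg (1 + (zet n) ^ l.val)
    linarith
  -- per-k convergence
  have key : ∀ k : ZMod n, Tendsto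
      (fun d => l1C (∏ j ∈ Finset.Icc j₀ (j₀ + d), (eigpoly n q k j * eigpoly n q l j)))
      atTop (nhds 0) := by
    intro k
    by_cases hkl : k = l
    · subst hkl
      have := hhollow k hl j₀
      convert this using 2 with d
      exact congrArg l1C (Finset.prod_congr rfl fun j _ => (sq (eigpoly n q k j)).symm)
    · -- the ergodic case
      set t : ℕ → ℝ := fun j => ∑ g : ZMod n, ∑ h : ZMod n,
        if (k - l) * (g - h) ≠ 0 then ev1 (q j g) * ev1 (q j h) else 0 with hT
      have ht0 : ∀ j, 0 ≤ t j := by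
        intro j
        refine Finset.sum_nonneg fun g _ => Finset.sum_nonneg fun h _ => ?_
        split
        · exact mul_nonneg (ev1_nonneg (hpos j g)) (ev1_nonneg (hpos j h))
        · exact le_refl 0
      have hergt : ¬ Summable t := herg k l hkl
      -- the local mass
      set β : ℕ → ZMod n → ℝ := fun j g => ev1 (q j g) with hβ
      have hβ0 : ∀ j g, 0 ≤ β j g := fun j g => ev1_nonneg (hpos j g)
      have hββ1 : ∀ j, ∑ g : ZMod n, ∑ h : ZMod n, β j g * β j h = 1 := by
        intro j
        rw [← Finset.sum_mul_sum]
        rw [hsum j, one_mul]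
      have ht1 : ∀ j, t j ≤ 1 := by
        intro j
        rw [← hββ1 j]
        refine Finset.sum_le_sum fun g _ => Finset.sum_le_sum fun h _ => ?_
        split
        · exact le_refl _
        · exact mul_nonneg (hβ0 j g) (hβ0 j h)
      have hfac0 : ∀ j, 0 ≤ 1 - c * t j := by
        intro j
        have : c * t j ≤ 1 * 1 := mul_le_mul hc_le1 (ht1 j) (ht0 j) (by norm_num)
        linarith
      -- per-j estimate
      have hj : ∀ j, l1C (eigpoly n q k j * eigpoly n q l j) ≤ 1 - c * t j := by
        intro j
        rw [eig_mul_eig]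
        have hterm : ∀ g h : ZMod n,
            l1C ((((zet n) ^ (k * g).val * (zet n) ^ (l * h).val
                + (zet n) ^ (k * h).val * (zet n) ^ (l * g).val) / 2)
              • (toC (q j g) * toC (q j h)))
            ≤ (if (k - l) * (g - h) ≠ 0 then (1 - c) else 1) * (β j g * β j h) := by
          intro g h
          have hTle : l1C (toC (q j g) * toC (q j h)) ≤ β j g * β j h := by
            refine (l1C_mul_le _ _).trans ?_
            rw [l1C_toC (hpos j g), l1C_toC (hpos j h)]
          have hd : ‖(((zet n) ^ (k * g).val * (zet n) ^ (l * h).val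
                + (zet n) ^ (k * h).val * (zet n) ^ (l * g).val) / 2)‖
              = ‖1 + (zet n) ^ ((k - l) * (h - g)).val‖ / 2 := by
            have e1 : (zet n) ^ (k * g).val * (zet n) ^ (l * h).val
                = (zet n) ^ (k * g + l * h).val := zet_chi_mul n _ _
            have e2 : (zet n) ^ (k * h).val * (zet n) ^ (l * g).val
                = (zet n) ^ (k * g + l * h).val * (zet n) ^ ((k - l) * (h - g)).val := by
              rw [zet_chi_mul n (k * g + l * h) ((k - l) * (h - g)), zet_chi_mul n (k * h) (l * g)]
              congr 1
              ring_nf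
            rw [e1, e2, ← mul_one_add, norm_div, norm_mul, zet_chi_norm]
            norm_num
          have hdle : ‖(((zet n) ^ (k * g).val * (zet n) ^ (l * h).val
                + (zet n) ^ (k * h).val * (zet n) ^ (l * g).val) / 2)‖
              ≤ (if (k - l) * (g - h) ≠ 0 then (1 - c) else 1) := by
            rw [hd]
            split
            · rename_i hne0
              have hv : (k - l) * (h - g) ≠ 0 := by
                intro h0
                apply hne0
                have : (k - l) * (g - h) = -((k - l) * (h - g)) := by ring
                rw [this, h0, neg_zero]
              exact hc_le _ hv
            · have := norm_add_le (1 : ℂ) ((zet n) ^ ((k - l) * (h - g)).val)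
              rw [norm_one, zet_chi_norm] at this
              linarith
          refine (l1C_smul_le _ _).trans ?_
          refine le_trans (mul_le_mul hdle hTle (l1C_nonneg _) ?_) (le_refl _)
          split
          · linarith [hc_pos, hc_le1]
          · norm_num
        refine le_trans (l1C_sum_le _ _) ?_
        refine le_trans (Finset.sum_le_sum fun g _ => l1C_sum_le _ _) ?_
        refine le_trans (Finset.sum_le_sum fun g _ => Finset.sum_le_sum fun h _ => hterm g h) ?_
        have : ∀ g h : ZMod n,
            (if (k - l) * (g - h) ≠ 0 then (1 - c) else 1) * (β j g * β j h)
            = β j g * β j h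
              - c * (if (k - l) * (g - h) ≠ 0 then β j g * β j h else 0) := by
          intro g h
          split
          · ring
          · ring
        calc ∑ g : ZMod n, ∑ h : ZMod n,
              (if (k - l) * (g - h) ≠ 0 then (1 - c) else 1) * (β j g * β j h)
            = ∑ g : ZMod n, ∑ h : ZMod n, (β j g * β j h
                - c * (if (k - l) * (g - h) ≠ 0 then β j g * β j h else 0)) := by
              exact Finset.sum_congr rfl fun g _ => Finset.sum_congr rfl fun h _ => this g h
          _ = (∑ g : ZMod n, ∑ h : ZMod n, β j g * β j h)
              - c * ∑ g : ZMod n, ∑ h : ZMod n,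
                (if (k - l) * (g - h) ≠ 0 then β j g * β j h else 0) := by
              rw [Finset.mul_sum, ← Finset.sum_sub_distrib]
              refine Finset.sum_congr rfl fun g _ => ?_
              rw [Finset.mul_sum, ← Finset.sum_sub_distrib]
          _ = 1 - c * t j := by rw [hββ1 j]
          _ ≤ 1 - c * t j := le_refl _
      -- product estimate
      have hprod : ∀ s : Finset ℕ,
          l1C (∏ j ∈ s, (eigpoly n q k j * eigpoly n q l j)) ≤ ∏ j ∈ s, (1 - c * t j) := by
        intro s
        induction s using Finset.cons_induction with
        | empty => simpa using l1C_one
        | cons a s ha ih =>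
          rw [Finset.prod_cons, Finset.prod_cons]
          exact (l1C_mul_le _ _).trans (mul_le_mul (hj a) ih (l1C_nonneg _) (hfac0 a))
      have hexpb : ∀ s : Finset ℕ,
          (∏ j ∈ s, (1 - c * t j)) ≤ Real.exp (-(c * ∑ j ∈ s, t j)) := by
        intro s
        have h1 : ∀ j ∈ s, 1 - c * t j ≤ Real.exp (-(c * t j)) := by
          intro j _
          have := Real.add_one_le_exp (-(c * t j))
          linarith
        calc ∏ j ∈ s, (1 - c * t j) ≤ ∏ j ∈ s, Real.exp (-(c * t j)) :=
              Finset.prod_le_prod (fun j _ => hfac0 j) h1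
          _ = Real.exp (∑ j ∈ s, -(c * t j)) := (Real.exp_sum _ _).symm
          _ = Real.exp (-(c * ∑ j ∈ s, t j)) := by
              congr 1
              rw [Finset.mul_sum, ← Finset.sum_neg_distrib]
      -- divergence of the partial sums
      have hN := (not_summable_iff_tendsto_nat_atTop_of_nonneg ht0).mp hergt
      have hcomp : Tendsto (fun d : ℕ => j₀ + d + 1) atTop atTop :=
        tendsto_atTop_mono (fun d => by simp only [id_eq]; omega) tendsto_id
      have hR : Tendsto (fun d => ∑ i ∈ Finset.range (j₀ + d + 1), t i) atTop atTop :=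
        hN.comp hcomp
      have hsplit : ∀ d, ∑ j ∈ Finset.Icc j₀ (j₀ + d), t j
          = ∑ i ∈ Finset.range (j₀ + d + 1), t i - ∑ i ∈ Finset.range j₀, t i := by
        intro d
        have h1 : (∑ i ∈ Finset.Ico 0 j₀, t i) + ∑ i ∈ Finset.Ico j₀ (j₀ + d + 1), t i
            = ∑ i ∈ Finset.Ico 0 (j₀ + d + 1), t i :=
          Finset.sum_Ico_consecutive _ (Nat.zero_le _) (by omega)
        have h2 : Finset.Icc j₀ (j₀ + d) = Finset.Ico j₀ (j₀ + d + 1) := by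
          rw [Finset.Ico_add_one_right_eq_Icc]
        rw [h2, Finset.range_eq_Ico, Finset.range_eq_Ico, ← h1]
        ring
      have hS : Tendsto (fun d => ∑ j ∈ Finset.Icc j₀ (j₀ + d), t j) atTop atTop := by
        rw [tendsto_congr hsplit]
        simp only [sub_eq_add_neg]
        exact tendsto_atTop_add_const_right _ _ hR
      have hB : Tendsto (fun d => Real.exp (-(c * ∑ j ∈ Finset.Icc j₀ (j₀ + d), t j)))
          atTop (nhds 0) := by
        refine Real.tendsto_exp_atBot.comp ?_
        exact tendsto_neg_atTop_atBot.comp (hS.const_mul_atTop hc_pos)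
      refine squeeze_zero (fun d => l1C_nonneg _) (fun d => ?_) hB
      exact (hprod _).trans (hexpb _)
  -- assemble
  refine squeeze_zero (fun d => l1C_nonneg _) (fun d => l1C_sum_le _ _) ?_
  have := tendsto_finset_sum (Finset.univ : Finset (ZMod n)) (fun k _ => key k)
  simpa using this
end

section
/- Fix an integer n ≥ 1 and work in the group algebra A := (ℝ[X])[ℤ/nℤ] (the additive monoid algebra of ℤ/nℤ with coefficients in the polynomial ring ℝ[X]), writing [g] for the canonical basis element of g ∈ ℤ/nℤ. For j ∈ ℕ set u_j := [0] + X^{2^j}·[1] ∈ A. Then for every d ∈ ℕ: ∏_{j=0}^{d} u_j = Σ_{g∈ℤ/nℤ} ( Σ_{a < 2^{d+1}, s₂(a) ≡ g (mod n)} X^a ) · [g], where s₂(a) denotes the sum of the binary digits of a and the congruence means the image of s₂(a) in ℤ/nℤ equals g. -/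
open Polynomial

private lemma sdig_two_mul (m : ℕ) :
    (Nat.digits 2 (2 * m)).sum = (Nat.digits 2 m).sum := by
  rcases Nat.eq_zero_or_pos m with h | h
  · simp [h]
  · rw [Nat.digits_def' (by norm_num : (1:ℕ) < 2) (by omega)]
    simp [Nat.mul_div_cancel_left, Nat.mul_mod_right]

private lemma sdig_two_mul_add_one (m : ℕ) :
    (Nat.digits 2 (2 * m + 1)).sum = (Nat.digits 2 m).sum + 1 := by
  rw [Nat.digits_def' (by norm_num : (1:ℕ) < 2) (by omega)]
  have h1 : (2 * m + 1) % 2 = 1 := by omega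
  have h2 : (2 * m + 1) / 2 = m := by omega
  rw [h1, h2, List.sum_cons, Nat.add_comm]

private lemma sdig_pow_add : ∀ k a, a < 2 ^ k →
    (Nat.digits 2 (2 ^ k + a)).sum = (Nat.digits 2 a).sum + 1 := by
  intro k
  induction k with
  | zero =>
    intro a ha
    interval_cases a
    simp
  | succ k ih =>
    intro a ha
    have hpow : 2 ^ (k + 1) = 2 ^ k * 2 := by ring
    have hd : a / 2 < 2 ^ k := by omega
    have h : 2 ^ (k + 1) + a = 2 * (2 ^ k + a / 2) + a % 2 := by omega
    rcases Nat.mod_two_eq_zero_or_one a with h2 | h2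
    · have ha2 : 2 * (a / 2) = a := by omega
      have e := sdig_two_mul (a / 2); rw [ha2] at e
      rw [h, h2, add_zero, sdig_two_mul, ih _ hd, e]
    · have ha2 : 2 * (a / 2) + 1 = a := by omega
      have e := sdig_two_mul_add_one (a / 2); rw [ha2] at e
      rw [h, h2, sdig_two_mul_add_one, ih _ hd, ← e]

private lemma key (n : ℕ) [NeZero n] (d : ℕ) :
    ∏ j ∈ Finset.range (d + 1),
        (AddMonoidAlgebra.single (0 : ZMod n) (1 : ℝ[X]) +
          AddMonoidAlgebra.single (1 : ZMod n) ((X : ℝ[X]) ^ (2 ^ j)))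
      = ∑ a ∈ Finset.range (2 ^ (d + 1)),
          AddMonoidAlgebra.single (((Nat.digits 2 a).sum : ZMod n)) ((X : ℝ[X]) ^ a) := by
  induction d with
  | zero =>
    rw [Finset.prod_range_one]
    norm_num [Finset.sum_range_succ]
  | succ d ih =>
    rw [Finset.prod_range_succ, ih, Finset.sum_mul]
    have h2 : 2 ^ (d + 1 + 1) = 2 ^ (d + 1) + 2 ^ (d + 1) := by ring
    rw [h2, Finset.sum_range_add, ← Finset.sum_add_distrib]
    refine Finset.sum_congr rfl fun a ha => ?_
    have ha' : a < 2 ^ (d + 1) := Finset.mem_range.mp ha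
    rw [mul_add, AddMonoidAlgebra.single_mul_single, AddMonoidAlgebra.single_mul_single,
      mul_one, add_zero, sdig_pow_add _ _ ha', ← pow_add]
    push_cast
    ring_nf

/-- The computation from Section 4: in the group algebra `(ℝ[X])[ℤ/nℤ]`, the product
`∏_{j=0}^{d} ([0] + X^{2^j}·[1])` equals
`∑_g (∑_{a < 2^{d+1}, s₂(a) ≡ g (mod n)} X^a)·[g]`, where `s₂(a)` is the binary digit
sum of `a`. -/
theorem binary_digit_sum_product (n : ℕ) [NeZero n] (d : ℕ) :
    ∏ j ∈ Finset.range (d + 1),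
        (AddMonoidAlgebra.single (0 : ZMod n) (1 : ℝ[X]) +
          AddMonoidAlgebra.single (1 : ZMod n) ((X : ℝ[X]) ^ (2 ^ j)))
      = ∑ g : ZMod n,
          AddMonoidAlgebra.single g
            (∑ a ∈ Finset.range (2 ^ (d + 1)),
              if ((Nat.digits 2 a).sum : ZMod n) = g then (X : ℝ[X]) ^ a else 0) := by
  rw [key]
  have hsingle : ∀ (g : ZMod n) (s : Finset ℕ) (f : ℕ → ℝ[X]),
      AddMonoidAlgebra.single g (∑ a ∈ s, f a) = ∑ a ∈ s, AddMonoidAlgebra.single g (f a) :=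
    fun g s f => map_sum (AddMonoidAlgebra.singleAddHom g) f s
  simp_rw [hsingle]
  rw [Finset.sum_comm]
  refine Finset.sum_congr rfl fun a _ => ?_
  have : ∀ g : ZMod n,
      AddMonoidAlgebra.single g (if ((Nat.digits 2 a).sum : ZMod n) = g then (X:ℝ[X])^a else 0)
        = if ((Nat.digits 2 a).sum : ZMod n) = g then AddMonoidAlgebra.single g ((X:ℝ[X])^a) else 0 := by
    intro g; split <;> simp
  simp_rw [this]
  rw [Finset.sum_ite_eq]
  simp
end

section
/- Let k ≥ 1 be an integer and let a, a' be Laurent polynomials in ℝ[x,x⁻¹] with nonnegative coefficients and a(1) = a'(1) = 1. For i ∈ ℤ/kℤ let A_i (respectively A'_i) denote the sum of the coefficients of a (respectively a') over exponents n ∈ ℤ with n ≡ i (mod k). Suppose there are real numbers η, μ with 1/2 ≤ η ≤ 1 and 1/2 ≤ μ ≤ 1 such that A_i ≤ η and A'_i ≤ μ for all i ∈ ℤ/kℤ. Then the sum of the coefficients of a·a' over exponents not divisible by k is at least η + μ − 2ημ. -/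
open Finsupp

/-- The sum of the coefficients of `p` over exponents congruent to `i` mod `k`. -/
noncomputable def classMass (k : ℕ) (p : AddMonoidAlgebra ℝ ℤ) (i : ZMod k) : ℝ :=
  (lcoeff p).sum fun m r => if (m : ZMod k) = i then r else 0

open scoped Classical in
lemma classMass_eq_proj (k : ℕ) (p : AddMonoidAlgebra ℝ ℤ) (i : ZMod k) :
    classMass k p i
      = (AddMonoidAlgebra.mapDomainRingHom ℝ (Int.castAddHom (ZMod k)) p).coeff i := by
  rw [AddMonoidAlgebra.mapDomainRingHom_apply, AddMonoidAlgebra.coeff_mapDomain,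
    Finsupp.mapDomain, Finsupp.sum_apply]
  unfold classMass lcoeff
  exact Finsupp.sum_congr fun m _ => by
    rw [Finsupp.single_apply, Int.coe_castAddHom]

/-- Coefficient of a product in a group algebra over a finite group. -/
lemma mul_apply_fintype {G : Type*} [AddCommGroup G] [Fintype G] [DecidableEq G]
    (b b' : AddMonoidAlgebra ℝ G) (x : G) :
    (b * b').coeff x = ∑ i : G, b.coeff i * b'.coeff (x - i) := by
  rw [AddMonoidAlgebra.coeff_mul_antidiag b b' x
      (Finset.univ.image fun i => (i, x - i))
      (by
        intro p
        simp only [Finset.mem_image, Finset.mem_univ, true_and]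
        constructor
        · rintro ⟨i, rfl⟩; exact add_sub_cancel i x
        · intro h; exact ⟨p.1, by rw [← h]; simp⟩)]
  rw [Finset.sum_image (by intro i _ j _ h; exact (Prod.mk.injEq ..).mp h |>.1)]

open scoped Classical in
lemma classMass_mul (k : ℕ) [NeZero k] (a a' : AddMonoidAlgebra ℝ ℤ) (j : ZMod k) :
    classMass k (a * a') j = ∑ i : ZMod k, classMass k a i * classMass k a' (j - i) := by
  rw [classMass_eq_proj, map_mul, mul_apply_fintype]
  exact Finset.sum_congr rfl fun i _ => by rw [classMass_eq_proj, classMass_eq_proj]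

open scoped Classical in
lemma classMass_nonneg (k : ℕ) (p : AddMonoidAlgebra ℝ ℤ) (hp : ∀ m, 0 ≤ lcoeff p m)
    (i : ZMod k) : 0 ≤ classMass k p i := by
  apply Finset.sum_nonneg
  intro m _
  dsimp only
  split
  · exact hp m
  · exact le_refl _

open scoped Classical in
lemma sum_classMass (k : ℕ) [NeZero k] (p : AddMonoidAlgebra ℝ ℤ) :
    ∑ i : ZMod k, classMass k p i = ev1 p := by
  unfold classMass ev1 Finsupp.sum
  rw [Finset.sum_comm]
  apply Finset.sum_congr rfl
  intro m _
  simp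

/-- The key finite optimization inequality. -/
lemma key_ineq {ι : Type*} [Fintype ι] [DecidableEq ι]
    (f g : ι → ℝ) (hf0 : ∀ i, 0 ≤ f i) (hg0 : ∀ i, 0 ≤ g i)
    (hfs : ∑ i, f i = 1) (hgs : ∑ i, g i = 1)
    {η μ : ℝ} (hη : 1/2 ≤ η) (hη1 : η ≤ 1)
    (hfη : ∀ i, f i ≤ η) (hgμ : ∀ i, g i ≤ μ)
    (hcard : 2 ≤ Fintype.card ι) :
    ∑ i, f i * g i ≤ 1 - η - μ + 2*η*μ := by
  have hne : (Finset.univ : Finset ι).Nonempty :=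
    @Finset.univ_nonempty ι _ (Fintype.card_pos_iff.mp (by omega))
  obtain ⟨j, -, hj⟩ := Finset.exists_max_image Finset.univ g hne
  have hne' : (Finset.univ.erase j).Nonempty := by
    rw [← Finset.card_pos, Finset.card_erase_of_mem (Finset.mem_univ j)]
    rw [Finset.card_univ]; omega
  obtain ⟨j', hj'mem, hj'⟩ := Finset.exists_max_image (Finset.univ.erase j) g hne'
  have hjj' : j' ≠ j := (Finset.mem_erase.mp hj'mem).1
  have hg12 : g j' ≤ g j := hj j' (Finset.mem_univ j')
  have hpair : g j + g j' ≤ 1 := by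
    rw [← hgs]
    have : ∑ i ∈ ({j, j'} : Finset ι), g i ≤ ∑ i, g i :=
      Finset.sum_le_sum_of_subset_of_nonneg (Finset.subset_univ _)
        (fun i _ _ => hg0 i)
    rwa [Finset.sum_pair (Ne.symm hjj')] at this
  have hfe : ∑ i ∈ Finset.univ.erase j, f i = 1 - f j := by
    have := Finset.add_sum_erase Finset.univ f (Finset.mem_univ j)
    rw [hfs] at this; linarith
  have hS : ∑ i, f i * g i ≤ f j * g j + (1 - f j) * g j' := by
    rw [← Finset.add_sum_erase Finset.univ (fun i => f i * g i) (Finset.mem_univ j)]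
    gcongr
    calc ∑ i ∈ Finset.univ.erase j, f i * g i
        ≤ ∑ i ∈ Finset.univ.erase j, f i * g j' := by
          apply Finset.sum_le_sum
          intro i hi
          exact mul_le_mul_of_nonneg_left (hj' i hi) (hf0 i)
      _ = (1 - f j) * g j' := by rw [← Finset.sum_mul, hfe]
  nlinarith [mul_nonneg (sub_nonneg.mpr (hfη j)) (sub_nonneg.mpr hg12),
    mul_nonneg (sub_nonneg.mpr hη1) (by linarith : (0:ℝ) ≤ 1 - g j - g j'),
    mul_nonneg (by linarith : (0:ℝ) ≤ 2*η - 1) (sub_nonneg.mpr (hgμ j)),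
    hg0 j']

open scoped Classical in
/-- Lemma 7.3: if `a`, `a'` have nonnegative coefficients with total mass `1`, and each
residue class mod `k` carries at most `η` (resp. `μ`) of the mass of `a` (resp. `a'`),
with `1/2 ≤ η, μ ≤ 1`, then the mass of `a·a'` on exponents not divisible by `k` is at
least `η + μ − 2ημ`. -/
theorem mass_off_B_lower_bound (k : ℕ) (hk : 1 ≤ k)
    (a a' : AddMonoidAlgebra ℝ ℤ)
    (ha : ∀ m, 0 ≤ lcoeff a m) (ha' : ∀ m, 0 ≤ lcoeff a' m)
    (h1 : ev1 a = 1) (h1' : ev1 a' = 1)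
    (η μ : ℝ) (hη : 1 / 2 ≤ η) (hη1 : η ≤ 1) (hμ : 1 / 2 ≤ μ) (hμ1 : μ ≤ 1)
    (hA : ∀ i : ZMod k, classMass k a i ≤ η)
    (hA' : ∀ i : ZMod k, classMass k a' i ≤ μ) :
    η + μ - 2 * η * μ ≤
      (lcoeff (a * a')).sum fun m r => if (k : ℤ) ∣ m then 0 else r := by
  haveI : NeZero k := ⟨by omega⟩
  rcases eq_or_lt_of_le hk with hk1 | hk2
  · -- k = 1 : every exponent is divisible, and η = μ = 1
    subst hk1
    have hz : ((lcoeff (a * a')).sum fun m r => if ((1:ℕ) : ℤ) ∣ m then 0 else r) = 0 := by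
      rw [show (fun (m : ℤ) (r : ℝ) => if ((1:ℕ) : ℤ) ∣ m then 0 else r)
            = fun _ _ => (0 : ℝ) from funext fun m => funext fun r => by
              simp [one_dvd]]
      exact Finsupp.sum_fun_zero _
    rw [hz]
    have hη' : (1:ℝ) ≤ η := by
      have := hA 0
      rw [show classMass 1 a 0 = ev1 a from
        Finsupp.sum_congr fun m _ => by simp [Subsingleton.elim ((m : ZMod 1)) 0], h1] at this
      exact this
    have hμ' : (1:ℝ) ≤ μ := by
      have := hA' 0
      rw [show classMass 1 a' 0 = ev1 a' from
        Finsupp.sum_congr fun m _ => by simp [Subsingleton.elim ((m : ZMod 1)) 0], h1'] at this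
      exact this
    nlinarith
  · -- k ≥ 2
    have hXs : ∑ i : ZMod k, classMass k a i = 1 := by rw [sum_classMass, h1]
    have hYs : ∑ i : ZMod k, classMass k a' i = 1 := by rw [sum_classMass, h1']
    -- total mass of a * a' is 1
    have hev : ev1 (a * a') = 1 := by
      rw [← sum_classMass k (a * a')]
      calc ∑ j : ZMod k, classMass k (a * a') j
          = ∑ j : ZMod k, ∑ i : ZMod k, classMass k a i * classMass k a' (j - i) :=
            Finset.sum_congr rfl fun j _ => classMass_mul k a a' j
        _ = ∑ i : ZMod k, ∑ j : ZMod k, classMass k a i * classMass k a' (j - i) :=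
            Finset.sum_comm
        _ = ∑ i : ZMod k, classMass k a i * ∑ j : ZMod k, classMass k a' (j - i) := by
            simp [Finset.mul_sum]
        _ = 1 := by
            have : ∀ i : ZMod k, ∑ j : ZMod k, classMass k a' (j - i) = 1 := by
              intro i
              rw [← hYs]
              exact Fintype.sum_equiv (Equiv.subRight i) _ _ fun j => rfl
            simp only [this, mul_one, hXs]
    -- rewrite the goal as 1 - classMass k (a * a') 0
    have hgoal : ((lcoeff (a * a')).sum fun m r => if (k : ℤ) ∣ m then 0 else r)
        = ev1 (a * a') - classMass k (a * a') 0 := by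
      unfold ev1 classMass
      rw [← Finsupp.sum_sub]
      apply Finsupp.sum_congr
      intro m _
      by_cases h : (k : ℤ) ∣ m
      · rw [if_pos h, if_pos ((ZMod.intCast_zmod_eq_zero_iff_dvd m k).mpr h)]; ring
      · rw [if_neg h, if_neg fun hc => h ((ZMod.intCast_zmod_eq_zero_iff_dvd m k).mp hc)]
        ring
    rw [hgoal, hev]
    -- apply the key inequality
    have hmain : classMass k (a * a') 0
        ≤ 1 - η - μ + 2 * η * μ := by
      rw [classMass_mul k a a' 0]
      have := key_ineq (fun i => classMass k a i) (fun i => classMass k a' (0 - i))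
        (fun i => classMass_nonneg k a ha i) (fun i => classMass_nonneg k a' ha' (0 - i))
        hXs
        (by rw [← hYs]; exact Fintype.sum_equiv (Equiv.subLeft 0) _ _ fun j => rfl)
        hη hη1 (fun i => hA i) (fun i => hA' (0 - i))
        (by rw [ZMod.card]; omega)
      exact this
    linarith
end

section
/- Let k ≥ 1 be an integer, let a, a' be Laurent polynomials in ℝ[x,x⁻¹] with nonnegative coefficients, and let δ ≥ 0. For i ∈ ℤ/kℤ let A_i denote the sum of the coefficients of a over exponents n ∈ ℤ with n ≡ i (mod k). Suppose there exist distinct i, j ∈ ℤ/kℤ with A_i ≥ δ·a(1) and A_j ≥ δ·a(1). Then the sum of the coefficients of a·a' over exponents not divisible by k is at least δ·a(1)·a'(1). -/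
open Finsupp

open scoped Classical in
/-- The coefficient of the pushforward of `p` to `ℝ[ZMod k]` at `c` is the mass of the
residue class `c`. -/
lemma mapDomain_coeff (k : ℕ) (p : AddMonoidAlgebra ℝ ℤ) (c : ZMod k) :
    (AddMonoidAlgebra.mapDomain (⇑(Int.castAddHom (ZMod k))) p).coeff c =
      p.coeff.sum fun m r => if (m : ZMod k) = c then r else 0 := by
  show Finsupp.mapDomain _ p.coeff c = _
  rw [Finsupp.mapDomain, Finsupp.sum_apply]
  refine Finsupp.sum_congr fun m _ => ?_
  simp [Finsupp.single_apply]

open scoped Classical in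
/-- Lemma 7.4: if two distinct residue classes mod `k` each carry at least a `δ`-fraction
of the mass of `a`, then the mass of `a·a'` on exponents not divisible by `k` is at
least `δ·a(1)·a'(1)`. -/
theorem two_classes_mass_off_B (k : ℕ) (hk : 1 ≤ k)
    (a a' : AddMonoidAlgebra ℝ ℤ)
    (ha : ∀ m, 0 ≤ lcoeff a m) (ha' : ∀ m, 0 ≤ lcoeff a' m)
    (δ : ℝ) (hδ : 0 ≤ δ)
    (i j : ZMod k) (hij : i ≠ j)
    (hi : δ * ev1 a ≤ classMass k a i)
    (hj : δ * ev1 a ≤ classMass k a j) :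
    δ * ev1 a * ev1 a' ≤
      (lcoeff (a * a')).sum fun m r => if (k : ℤ) ∣ m then 0 else r := by
  haveI : NeZero k := ⟨by omega⟩
  set f : ℤ →+ ZMod k := Int.castAddHom (ZMod k) with hf
  set b : AddMonoidAlgebra ℝ (ZMod k) := AddMonoidAlgebra.mapDomain (⇑f) a with hb
  set b' : AddMonoidAlgebra ℝ (ZMod k) := AddMonoidAlgebra.mapDomain (⇑f) a' with hb'
  -- coefficients of b, b' are nonnegative
  have hbnn : ∀ c, 0 ≤ b.coeff c := by
    intro c
    rw [hb, mapDomain_coeff]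
    refine Finset.sum_nonneg fun m _ => ?_
    dsimp only
    split <;> [exact ha m; exact le_refl 0]
  have hb'nn : ∀ c, 0 ≤ b'.coeff c := by
    intro c
    rw [hb', mapDomain_coeff]
    refine Finset.sum_nonneg fun m _ => ?_
    dsimp only
    split <;> [exact ha' m; exact le_refl 0]
  -- total mass
  have hT : ev1 a' = ∑ c : ZMod k, b'.coeff c := by
    have h0 : (Finsupp.mapDomain (⇑f) a'.coeff).sum (fun _ r => r) = ∑ c : ZMod k, b'.coeff c :=
      Finsupp.sum_fintype _ _ fun _ => rfl
    rw [hb', ← h0, Finsupp.sum_mapDomain_index (fun _ => rfl) (fun _ _ _ => rfl)]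
    rfl
  -- class masses are coefficients of b
  have hbi : δ * ev1 a ≤ b.coeff i := by
    rw [hb, mapDomain_coeff]; exact hi
  have hbj : δ * ev1 a ≤ b.coeff j := by
    rw [hb, mapDomain_coeff]; exact hj
  -- the RHS equals the off-zero mass of b * b'
  have hRHS : ((lcoeff (a * a')).sum fun m r => if (k : ℤ) ∣ m then 0 else r)
      = ∑ c : ZMod k, (if c = 0 then 0 else (b * b').coeff c) := by
    have h1 : ((lcoeff (a * a')).sum fun m r => if (k : ℤ) ∣ m then 0 else r)
        = (a * a').coeff.sum fun m r => if ((m : ZMod k) = 0) then 0 else r := by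
      refine Finsupp.sum_congr fun m _ => ?_
      simp only [ZMod.intCast_zmod_eq_zero_iff_dvd]
    rw [h1]
    have h2 : ((a * a').coeff.sum fun m r => if ((m : ZMod k) = 0) then 0 else r)
        = (AddMonoidAlgebra.mapDomain (⇑f) (a * a')).coeff.sum fun c r => if c = 0 then 0 else r := by
      show _ = (Finsupp.mapDomain (⇑f) (a * a').coeff).sum _
      rw [Finsupp.sum_mapDomain_index]
      · rfl
      · intro c; split <;> rfl
      · intro c r s; split <;> simp
    have h3 : AddMonoidAlgebra.mapDomain (⇑f) (a * a') = b * b' := AddMonoidAlgebra.mapDomain_mul f a a'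
    rw [h2, h3]
    exact Finsupp.sum_fintype _ _ fun c => by split <;> rfl
  rw [hRHS]
  -- rewrite the off-zero mass as a double sum
  have hkey : (∑ c : ZMod k, (if c = 0 then 0 else (b * b').coeff c))
      = ∑ q : ZMod k, ∑ p : ZMod k, (if p + q = 0 then 0 else b.coeff p * b'.coeff q) := by
    have hm : ∀ c : ZMod k, (b * b').coeff c = ∑ p : ZMod k, ∑ q : ZMod k,
        (if p + q = c then b.coeff p * b'.coeff q else 0) := by
      intro c
      rw [AddMonoidAlgebra.mul_apply]
      rw [Finsupp.sum_fintype _ _ (fun _ => by simp)]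
      refine Finset.sum_congr rfl fun p _ => ?_
      rw [Finsupp.sum_fintype _ _ (fun _ => by simp)]
    calc (∑ c : ZMod k, (if c = 0 then 0 else (b * b').coeff c))
        = ∑ c : ZMod k, ∑ p : ZMod k, ∑ q : ZMod k,
            (if p + q = c then (if c = 0 then 0 else b.coeff p * b'.coeff q) else 0) := by
          refine Finset.sum_congr rfl fun c _ => ?_
          by_cases hc : c = 0
          · simp [hc]
          · rw [if_neg hc, hm c]
            refine Finset.sum_congr rfl fun p _ => Finset.sum_congr rfl fun q _ => ?_
            rw [if_neg hc]
      _ = ∑ p : ZMod k, ∑ q : ZMod k, ∑ c : ZMod k,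
            (if p + q = c then (if c = 0 then 0 else b.coeff p * b'.coeff q) else 0) := by
          rw [Finset.sum_comm]
          refine Finset.sum_congr rfl fun p _ => Finset.sum_comm
      _ = ∑ p : ZMod k, ∑ q : ZMod k, (if p + q = 0 then 0 else b.coeff p * b'.coeff q) := by
          refine Finset.sum_congr rfl fun p _ => Finset.sum_congr rfl fun q _ => ?_
          rw [Finset.sum_ite_eq _ (p + q) fun c => if c = 0 then 0 else b.coeff p * b'.coeff q]
          simp
      _ = ∑ q : ZMod k, ∑ p : ZMod k, (if p + q = 0 then 0 else b.coeff p * b'.coeff q) :=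
          Finset.sum_comm
  rw [hkey]
  -- lower bound each inner sum
  have hinner : ∀ q : ZMod k, (δ * ev1 a) * b'.coeff q
      ≤ ∑ p : ZMod k, (if p + q = 0 then 0 else b.coeff p * b'.coeff q) := by
    intro q
    set t : ZMod k := if i + q = 0 then j else i with ht
    have htq : t + q ≠ 0 := by
      by_cases h : i + q = 0
      · rw [ht, if_pos h]
        intro hcon
        exact hij (add_right_cancel (h.trans hcon.symm))
      · rw [ht, if_neg h]; exact h
    have hbt : δ * ev1 a ≤ b.coeff t := by
      rw [ht]; split <;> [exact hbj; exact hbi]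
    calc (δ * ev1 a) * b'.coeff q ≤ b.coeff t * b'.coeff q :=
          mul_le_mul_of_nonneg_right hbt (hb'nn q)
      _ = (if t + q = 0 then 0 else b.coeff t * b'.coeff q) := by rw [if_neg htq]
      _ ≤ ∑ p : ZMod k, (if p + q = 0 then 0 else b.coeff p * b'.coeff q) := by
          refine Finset.single_le_sum (f := fun p => if p + q = 0 then 0 else b.coeff p * b'.coeff q)
            (fun p _ => ?_) (Finset.mem_univ t)
          show 0 ≤ (if p + q = 0 then 0 else b.coeff p * b'.coeff q)
          split
          · exact le_refl 0
          · exact mul_nonneg (hbnn p) (hb'nn q)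
  calc δ * ev1 a * ev1 a' = ∑ q : ZMod k, (δ * ev1 a) * b'.coeff q := by
        rw [hT, Finset.mul_sum]
    _ ≤ ∑ q : ZMod k, ∑ p : ZMod k, (if p + q = 0 then 0 else b.coeff p * b'.coeff q) :=
        Finset.sum_le_sum fun q _ => hinner q
end
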